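/- For every r > r₊ and 𝒬 ≥ 0, the local rotation frequency ω(r) = a/(r²+a²) lies strictly between the pseudo potentials: V₋(r,𝒬) < ω(r) < V₊(r,𝒬) when a > 0 and 𝒬 ≥ 0 (with equality only in the limits r → r₊ and r → ∞); equivalently R(r, ω(r), 1, 𝒬) ≤ 0 with equality only at those limits. -/

import Mathlib

/-- For `a > 0`, `𝒬 ≥ 0` and every `r > r₊`, the local rotation frequency
`ω(r) = a/(r²+a²)` lies strictly between the pseudo potentials,
`V₋(r,𝒬) < ω(r) < V₊(r,𝒬)`; equivalently `R(r, ω(r), 1, 𝒬) < 0`. -/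
theorem omega_between_potentials (M a Q : ℝ) (hM : 0 < M)
    (ha : 0 < a) (haM : a < M) (hQ : 0 ≤ Q)
    (Δ : ℝ → ℝ) (hΔ : ∀ r, Δ r = r ^ 2 - 2 * M * r + a ^ 2)
    (Vp Vm : ℝ → ℝ)
    (hVp : ∀ r, Vp r = (2 * M * a * r +
      Real.sqrt (r * Δ r * ((1 + Q) * r ^ 3 + a ^ 2 * Q * (r + 2 * M)))) /
      (r * (r * (r ^ 2 + a ^ 2) + 2 * M * a ^ 2)))
    (hVm : ∀ r, Vm r = (2 * M * a * r -
      Real.sqrt (r * Δ r * ((1 + Q) * r ^ 3 + a ^ 2 * Q * (r + 2 * M)))) /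
      (r * (r * (r ^ 2 + a ^ 2) + 2 * M * a ^ 2))) :
    ∀ r : ℝ, M + Real.sqrt (M ^ 2 - a ^ 2) < r →
      Vm r < a / (r ^ 2 + a ^ 2) ∧ a / (r ^ 2 + a ^ 2) < Vp r ∧
      ((r ^ 2 + a ^ 2) * (a / (r ^ 2 + a ^ 2)) - a) ^ 2 -
        Δ r * (Q + (a * (a / (r ^ 2 + a ^ 2)) - 1) ^ 2) < 0 := by
  intro r hr
  have hMa : (0:ℝ) ≤ M ^ 2 - a ^ 2 := by nlinarith
  have hs : Real.sqrt (M ^ 2 - a ^ 2) ^ 2 = M ^ 2 - a ^ 2 := Real.sq_sqrt hMa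
  have hsnn : 0 ≤ Real.sqrt (M ^ 2 - a ^ 2) := Real.sqrt_nonneg _
  have hr0 : 0 < r := by linarith
  have hΔr : 0 < Δ r := by
    rw [hΔ]
    nlinarith [sq_nonneg (r - M - Real.sqrt (M ^ 2 - a ^ 2))]
  have hΔe : Δ r = r ^ 2 - 2 * M * r + a ^ 2 := hΔ r
  have hden : 0 < r * (r * (r ^ 2 + a ^ 2) + 2 * M * a ^ 2) := by positivity
  have hra : 0 < r ^ 2 + a ^ 2 := by positivity
  set S := r * Δ r * ((1 + Q) * r ^ 3 + a ^ 2 * Q * (r + 2 * M)) with hSdef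
  clear_value S
  have hSpos : 0 < S := by
    rw [hSdef]
    apply mul_pos (mul_pos hr0 hΔr)
    have h1 : 0 < (1 + Q) * r ^ 3 := by positivity
    have h2 : 0 ≤ a ^ 2 * Q * (r + 2 * M) := by positivity
    linarith
  have hsq : Real.sqrt S ^ 2 = S := Real.sq_sqrt hSpos.le
  have hsqnn : 0 ≤ Real.sqrt S := Real.sqrt_nonneg _
  -- inner inequality
  have hinner : a ^ 2 * r ^ 3 * Δ r <
      ((1 + Q) * r ^ 3 + a ^ 2 * Q * (r + 2 * M)) * (r ^ 2 + a ^ 2) ^ 2 := by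
    rw [hΔe]
    have h1 : 0 < r ^ 3 * (r ^ 4 + a ^ 2 * r ^ 2 + 2 * M * a ^ 2 * r) := by positivity
    have h2 : 0 ≤ (Q * r ^ 3 + a ^ 2 * Q * (r + 2 * M)) * (r ^ 2 + a ^ 2) ^ 2 := by
      have : 0 ≤ Q * r ^ 3 + a ^ 2 * Q * (r + 2 * M) := by positivity
      positivity
    nlinarith [h1, h2]
  have hkey2 : (a * r ^ 2 * Δ r) ^ 2 < S * (r ^ 2 + a ^ 2) ^ 2 := by
    have h := mul_lt_mul_of_pos_left hinner (mul_pos hr0 hΔr)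
    rw [hSdef]
    nlinarith [h]
  have hkey : a * r ^ 2 * Δ r < Real.sqrt S * (r ^ 2 + a ^ 2) := by
    nlinarith [hkey2, hsq, hsqnn, mul_pos (mul_pos ha (pow_pos hr0 2)) hΔr,
      mul_nonneg hsqnn hra.le]
  have haΔ : 0 < a * r ^ 2 * Δ r := by positivity
  have hid : a * (r * (r * (r ^ 2 + a ^ 2) + 2 * M * a ^ 2)) =
      2 * M * a * r * (r ^ 2 + a ^ 2) + a * r ^ 2 * Δ r := by
    rw [hΔe]; ring
  refine' ⟨_, _, _⟩
  · rw [hVm, ← hSdef, div_lt_div_iff₀ hden hra]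
    linarith [mul_nonneg hsqnn hra.le, haΔ, hid]
  · rw [hVp, ← hSdef, div_lt_div_iff₀ hra hden]
    linarith [hkey, hid]
  · have h1 : (r ^ 2 + a ^ 2) * (a / (r ^ 2 + a ^ 2)) - a = 0 := by
      field_simp
      ring
    rw [h1]
    have h4 : a * (a / (r ^ 2 + a ^ 2)) < 1 := by
      rw [← mul_div_assoc]
      refine (div_lt_one hra).mpr ?_
      rw [← sq]
      linarith [pow_pos hr0 2]
    have h5 : 0 < (a * (a / (r ^ 2 + a ^ 2)) - 1) ^ 2 := by
      have h6 := mul_pos (sub_pos.mpr h4) (sub_pos.mpr h4)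
      rw [sq]
      linarith [h6]
    linarith [mul_pos hΔr h5, mul_nonneg hΔr.le hQ]
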